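/- Let μ > 0 and α₀ = -e^{-μ}/(2μ²). Then y = 0 is a solution of the equation μ²α₀ e^{4μy} + (1 - 2μ²α₀) e^{2μy} + μ²α₀ - 2μy - 1 = 0, and it is the unique solution in the interval [0, 1/2]. -/

import Mathlib

theorem stmt_19 (μ : ℝ) (hμ : 0 < μ)
    (α₀ : ℝ) (hα₀ : α₀ = -Real.exp (-μ) / (2 * μ ^ 2))
    (eq : ℝ → ℝ)
    (heq : ∀ y, eq y = μ ^ 2 * α₀ * Real.exp (4 * μ * y) + (1 - 2 * μ ^ 2 * α₀) * Real.exp (2 * μ * y)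
      + μ ^ 2 * α₀ - 2 * μ * y - 1) :
    eq 0 = 0 ∧ ∀ y ∈ Set.Icc (0 : ℝ) (1 / 2), eq y = 0 → y = 0 := by
  have hμ' : μ ≠ 0 := ne_of_gt hμ
  have hβ : μ ^ 2 * α₀ = -Real.exp (-μ) / 2 := by
    rw [hα₀]; field_simp
  constructor
  · rw [heq]
    simp only [mul_zero, Real.exp_zero]
    ring
  · intro y hy hzero
    by_contra hne
    have hy0 : 0 < y := lt_of_le_of_ne hy.1 (Ne.symm hne)
    set x := 2 * μ * y with hx
    have hx0 : 0 < x := by positivity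
    have hxμ : x ≤ μ := by nlinarith [hy.2]
    have h1 : Real.exp (-μ) ≤ Real.exp (-x) := Real.exp_le_exp.mpr (by linarith)
    have h4 : Real.exp (4 * μ * y) = Real.exp x * Real.exp x := by
      rw [← Real.exp_add, hx]; ring_nf
    have hinv : Real.exp (-x) * Real.exp x = 1 := by
      rw [← Real.exp_add]; simp
    have hsq : (0:ℝ) ≤ (Real.exp x - 1) ^ 2 := sq_nonneg _
    have hkey : eq y = (-Real.exp (-μ) / 2) * (Real.exp x - 1) ^ 2
        + (Real.exp x - x - 1) := by
      rw [heq, h4, ← hx]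
      rw [show Real.exp (2 * μ * y) = Real.exp x from rfl]
      linear_combination (Real.exp x - 1) ^ 2 * hβ
    have hexp : Real.exp (-x) * (Real.exp x - 1) ^ 2
        = Real.exp x - 2 + Real.exp (-x) := by
      linear_combination (Real.exp x - 2) * hinv
    have h2 : (-Real.exp (-x) / 2) * (Real.exp x - 1) ^ 2 + (Real.exp x - x - 1)
        = (Real.exp x - Real.exp (-x)) / 2 - x := by
      linear_combination (-1/2 : ℝ) * hexp
    have hsinh := Real.self_lt_sinh_iff.mpr hx0
    rw [Real.sinh_eq] at hsinh
    linarith [mul_le_mul_of_nonneg_right h1 hsq]
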